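/- The generating function Aₙ(q) = Σ_λ q^{|λ|} over anti-lecture hall compositions of length n (nonnegative integer sequences with λ₁/1 ≥ λ₂/2 ≥ ··· ≥ λₙ/n ≥ 0) equals ∏_{i=1}^{n} (1 + qⁱ)/(1 − q^{i+1}). -/

import Mathlib

noncomputable section
open PowerSeries

/-- The number of anti-lecture hall compositions of `N` of length `n`:
nonnegative integer sequences `(λ₁,…,λₙ)` with `λᵢ/i ≥ λ_{i+1}/(i+1)`,
i.e. `(i+1)λᵢ ≥ i·λ_{i+1}`, and `Σλᵢ = N`. -/
def alhcCount (n N : ℕ) : ℕ :=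
  Nat.card {f : Fin n → ℕ //
    (∀ i : Fin n, ∀ h : (i : ℕ) + 1 < n,
      ((i : ℕ) + 1) * f ⟨(i : ℕ) + 1, h⟩ ≤ ((i : ℕ) + 2) * f i) ∧
    ∑ i, f i = N}

namespace ALHC

def Cond (n : ℕ) (f : Fin n → ℕ) : Prop :=
  ∀ i : Fin n, ∀ h : (i : ℕ) + 1 < n,
      ((i : ℕ) + 1) * f ⟨(i : ℕ) + 1, h⟩ ≤ ((i : ℕ) + 2) * f i

lemma alhcCount_eq (n N : ℕ) :
    alhcCount n N = Nat.card {f : Fin n → ℕ // Cond n f ∧ ∑ i, f i = N} := rfl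

def SC (ℓ k N : ℕ) : ℕ :=
  Nat.card {f : Fin (ℓ+1) → ℕ //
    (Cond (ℓ+1) f ∧ k ≤ f (Fin.last ℓ)) ∧ ∑ i, f i = N}

lemma bound_of_sum {n N : ℕ} (f : Fin n → ℕ) (h : ∑ i, f i = N) (i : Fin n) : f i ≤ N := by
  subst h
  exact Finset.single_le_sum (fun j _ => Nat.zero_le _) (Finset.mem_univ i)

lemma finite_subtype {n N : ℕ} (P : (Fin n → ℕ) → Prop) :
    Finite {f : Fin n → ℕ // P f ∧ ∑ i, f i = N} := by
  have hb : ∀ (f : {f : Fin n → ℕ // P f ∧ ∑ i, f i = N}) (i : Fin n), f.1 i < N + 1 :=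
    fun f i => Nat.lt_succ_of_le (bound_of_sum f.1 f.2.2 i)
  refine Finite.of_injective
      (fun f => (fun i => (⟨f.1 i, hb f i⟩ : Fin (N+1)) : Fin n → Fin (N+1))) ?_
  intro a b hab
  apply Subtype.ext
  funext i
  exact congrArg Fin.val (congrFun hab i)

/-- split according to whether the last part equals k -/
lemma SC_split (ℓ k N : ℕ) :
    SC ℓ k N =
      Nat.card {f : Fin (ℓ+1) → ℕ //
        (Cond (ℓ+1) f ∧ f (Fin.last ℓ) = k) ∧ ∑ i, f i = N} + SC ℓ (k+1) N := by
  haveI := finite_subtype (n := ℓ+1) (N := N) (fun f => Cond (ℓ+1) f ∧ k ≤ f (Fin.last ℓ))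
  haveI := finite_subtype (n := ℓ+1) (N := N) (fun f => Cond (ℓ+1) f ∧ f (Fin.last ℓ) = k)
  haveI := finite_subtype (n := ℓ+1) (N := N) (fun f => Cond (ℓ+1) f ∧ k+1 ≤ f (Fin.last ℓ))
  rw [SC, SC, ← Nat.card_sum]
  apply Nat.card_congr
  refine
    { toFun := fun f =>
        if h : f.1 (Fin.last ℓ) = k then
          Sum.inl ⟨f.1, ⟨⟨f.2.1.1, h⟩, f.2.2⟩⟩
        else
          Sum.inr ⟨f.1, ⟨⟨f.2.1.1, by have := f.2.1.2; omega⟩, f.2.2⟩⟩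
      invFun := Sum.elim
          (fun f => ⟨f.1, ⟨⟨f.2.1.1, le_of_eq f.2.1.2.symm⟩, f.2.2⟩⟩)
          (fun f => ⟨f.1, ⟨⟨f.2.1.1, by have := f.2.1.2; omega⟩, f.2.2⟩⟩)
      left_inv := ?_
      right_inv := ?_ }
  · intro f
    by_cases h : f.1 (Fin.last ℓ) = k <;> simp [h]
  · rintro (f | f)
    · simp [f.2.1.2]
    · have : ¬ (f.1 (Fin.last ℓ) = k) := by have := f.2.1.2; omega
      simp [this]


/-- restriction of a chain to the first coordinates -/
lemma cond_restrict {L : ℕ} {f : Fin (L+1) → ℕ} (hf : Cond (L+1) f) :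
    Cond L (f ∘ Fin.castSucc) := by
  intro i h
  have h' : (i : ℕ) + 1 < L + 1 := by omega
  have := hf ⟨(i : ℕ), by omega⟩ h'
  simpa [Fin.castSucc, Fin.castAdd, Fin.castLE] using this

lemma cond_snoc {L : ℕ} {g : Fin (L+1) → ℕ} (hg : Cond (L+1) g) (k : ℕ)
    (hk : (L + 1) * k ≤ (L + 2) * g (Fin.last L)) :
    Cond (L+2) (Fin.snoc g k) := by
  intro i h
  rcases Fin.eq_castSucc_or_eq_last i with ⟨j, rfl⟩ | rfl
  · simp only [Fin.coe_castSucc] at h ⊢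
    rcases Nat.lt_or_ge ((j : ℕ) + 1) (L+1) with hc | hc
    · have e1 : (⟨(j : ℕ) + 1, h⟩ : Fin (L+2)) = Fin.castSucc ⟨(j : ℕ) + 1, hc⟩ := rfl
      rw [e1, Fin.snoc_castSucc, Fin.snoc_castSucc]
      have := hg ⟨(j : ℕ), by omega⟩ hc
      simpa using this
    · have hjL : (j : ℕ) = L := by omega
      have ej : j = Fin.last L := by apply Fin.ext; simpa using hjL
      subst ej
      have e1 : (⟨((Fin.last L : Fin (L+1)) : ℕ) + 1, h⟩ : Fin (L+2)) = Fin.last (L+1) := by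
        apply Fin.ext; simp
      rw [e1, Fin.snoc_castSucc, Fin.snoc_last]
      simpa using hk
  · exfalso
    simp at h

/-- key: if the last part is k with 1 ≤ k ≤ L+1, the previous part is ≥ k -/
lemma prev_ge {L : ℕ} {f : Fin (L+2) → ℕ} (hf : Cond (L+2) f)
    (k : ℕ) (hlast : f (Fin.last (L+1)) = k) (hk2 : k ≤ L + 1) :
    k ≤ f (Fin.castSucc (Fin.last L)) := by
  have h' : (L : ℕ) + 1 < L + 2 := by omega
  have := hf ⟨L, by omega⟩ h'
  have e1 : (⟨(L : ℕ) + 1, h'⟩ : Fin (L+2)) = Fin.last (L+1) := by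
    apply Fin.ext; simp
  rw [e1, hlast] at this
  -- this : (L+1) * k ≤ (L+2) * f ⟨L, _⟩
  have e2 : ((⟨L, by omega⟩ : Fin (L+2)) : Fin (L+2)) = Fin.castSucc (Fin.last L) := by
    apply Fin.ext; simp
  rw [e2] at this
  simp only [Fin.coe_castSucc, Fin.val_last] at this
  by_contra hcon
  push_neg at hcon
  have hle : f (Fin.castSucc (Fin.last L)) + 1 ≤ k := hcon
  nlinarith [this]

/-- dropping the last coordinate when it equals k (1 ≤ k ≤ L+1). -/
lemma card_drop (L k N : ℕ) (hk1 : 1 ≤ k) (hk2 : k ≤ L + 1) (hkN : k ≤ N) :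
    Nat.card {f : Fin (L+2) → ℕ //
        (Cond (L+2) f ∧ f (Fin.last (L+1)) = k) ∧ ∑ i, f i = N} = SC L k (N - k) := by
  rw [SC]
  apply Nat.card_congr
  refine
    { toFun := fun f => ⟨f.1 ∘ Fin.castSucc, ⟨⟨cond_restrict f.2.1.1, ?_⟩, ?_⟩⟩
      invFun := fun g => ⟨Fin.snoc g.1 k, ⟨⟨?_, ?_⟩, ?_⟩⟩
      left_inv := ?_
      right_inv := ?_ }
  · exact prev_ge f.2.1.1 k f.2.1.2 (by omega)
  · have hs := f.2.2
    rw [Fin.sum_univ_castSucc] at hs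
    have := f.2.1.2
    simp only [Function.comp]
    omega
  · refine cond_snoc g.2.1.1 k ?_
    have := g.2.1.2
    nlinarith [this]
  · rw [Fin.snoc_last]
  · rw [Fin.sum_univ_castSucc, Fin.snoc_last]
    simp only [Fin.snoc_castSucc]
    have := g.2.2
    omega
  · intro f
    apply Subtype.ext
    have : Fin.snoc (f.1 ∘ Fin.castSucc) k = f.1 := by
      have h2 := f.2.1.2
      conv_rhs => rw [← Fin.snoc_init_self f.1]
      rw [h2]
      rfl
    simpa using this
  · intro g
    apply Subtype.ext
    simp [Fin.init_snoc]


lemma cond_snoc_zero {L : ℕ} {g : Fin L → ℕ} (hg : Cond L g) :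
    Cond (L+1) (Fin.snoc g 0) := by
  intro i h
  rcases Fin.eq_castSucc_or_eq_last i with ⟨j, rfl⟩ | rfl
  · simp only [Fin.coe_castSucc] at h ⊢
    rcases Nat.lt_or_ge ((j : ℕ) + 1) L with hc | hc
    · have e1 : (⟨(j : ℕ) + 1, h⟩ : Fin (L+1)) = Fin.castSucc ⟨(j : ℕ) + 1, hc⟩ := rfl
      rw [e1, Fin.snoc_castSucc, Fin.snoc_castSucc]
      have := hg ⟨(j : ℕ), by omega⟩ hc
      simpa using this
    · have hjL : (j : ℕ) + 1 = L := by omega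
      have e1 : (⟨(j : ℕ) + 1, h⟩ : Fin (L+1)) = Fin.last L := by
        apply Fin.ext; simpa using hjL
      rw [e1, Fin.snoc_last]
      simp
  · exfalso
    simp at h

/-- appending a zero -/
lemma card_last_zero (L N : ℕ) :
    Nat.card {f : Fin (L+1) → ℕ //
        (Cond (L+1) f ∧ f (Fin.last L) = 0) ∧ ∑ i, f i = N} = alhcCount L N := by
  rw [alhcCount_eq]
  apply Nat.card_congr
  refine
    { toFun := fun f => ⟨f.1 ∘ Fin.castSucc, cond_restrict f.2.1.1, ?_⟩
      invFun := fun g => ⟨Fin.snoc g.1 0, ⟨cond_snoc_zero g.2.1, Fin.snoc_last _ _⟩, ?_⟩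
      left_inv := ?_
      right_inv := ?_ }
  · have hs := f.2.2
    rw [Fin.sum_univ_castSucc, f.2.1.2] at hs
    simpa [Function.comp] using hs
  · rw [Fin.sum_univ_castSucc, Fin.snoc_last]
    simp only [Fin.snoc_castSucc]
    have := g.2.2
    omega
  · intro f
    apply Subtype.ext
    have h2 := f.2.1.2
    conv_rhs => rw [← Fin.snoc_init_self f.1]
    rw [h2]
    rfl
  · intro g
    apply Subtype.ext
    simp [Fin.init_snoc]

def tri : ℕ → ℕ
  | 0 => 0
  | (n+1) => tri n + (n+1)

lemma sum_id_fin (n : ℕ) : (∑ i : Fin n, ((i : ℕ) + 1)) = tri n := by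
  induction n with
  | zero => simp [tri]
  | succ n ih =>
      rw [Fin.sum_univ_castSucc]
      simp only [Fin.coe_castSucc, Fin.val_last]
      rw [ih, tri]

lemma lb_of_last {L : ℕ} {f : Fin (L+1) → ℕ} (hC : Cond (L+1) f)
    (hl : L + 1 ≤ f (Fin.last L)) : ∀ i : Fin (L+1), (i : ℕ) + 1 ≤ f i := by
  intro i
  obtain ⟨d, hd⟩ : ∃ d, (i : ℕ) + d = L := ⟨L - (i : ℕ), by omega⟩
  induction d generalizing i with
  | zero =>
      have : i = Fin.last L := by apply Fin.ext; simpa using hd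
      subst this
      simpa using hl
  | succ d ih =>
      have hc : (i : ℕ) + 1 < L + 1 := by omega
      have step := hC i hc
      have hnext := ih ⟨(i : ℕ) + 1, hc⟩ (by simpa using by omega)
      simp only [Fin.val_mk] at hnext
      nlinarith [step, hnext]

lemma sum_ge_tri {L N : ℕ} {f : Fin (L+1) → ℕ} (hC : Cond (L+1) f)
    (hl : L + 1 ≤ f (Fin.last L)) (hs : ∑ i, f i = N) : tri (L+1) ≤ N := by
  have : (∑ i : Fin (L+1), ((i : ℕ) + 1)) ≤ ∑ i, f i :=
    Finset.sum_le_sum (fun i _ => lb_of_last hC hl i)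
  rw [sum_id_fin, hs] at this
  exact this

/-- staircase subtraction -/
lemma card_stair (L N : ℕ) (hN : tri (L+1) ≤ N) :
    SC L (L+1) N = alhcCount (L+1) (N - tri (L+1)) := by
  rw [SC, alhcCount_eq]
  apply Nat.card_congr
  refine
    { toFun := fun f => ⟨fun i => f.1 i - ((i : ℕ) + 1), ?_, ?_⟩
      invFun := fun g => ⟨fun i => g.1 i + ((i : ℕ) + 1), ⟨?_, ?_⟩, ?_⟩
      left_inv := ?_
      right_inv := ?_ }
  · -- Cond of subtracted
    intro i h
    have lb := lb_of_last f.2.1.1 f.2.1.2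
    have step := f.2.1.1 i h
    have hb1 := lb ⟨(i : ℕ) + 1, h⟩
    have hb2 := lb i
    simp only [Fin.val_mk] at hb1 step ⊢
    obtain ⟨a', ha⟩ := Nat.exists_eq_add_of_le hb1
    obtain ⟨b', hb⟩ := Nat.exists_eq_add_of_le hb2
    rw [ha, hb] at step ⊢
    simp only [Nat.add_sub_cancel_left]
    nlinarith [step]
  · -- sum
    have lb := lb_of_last f.2.1.1 f.2.1.2
    have key : (∑ i : Fin (L+1), ((f.1 i - ((i : ℕ) + 1)) + ((i : ℕ) + 1)))
        = ∑ i, f.1 i := by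
      apply Finset.sum_congr rfl
      intro i _
      exact Nat.sub_add_cancel (lb i)
    rw [Finset.sum_add_distrib, sum_id_fin] at key
    have hf := f.2.2
    show (∑ i : Fin (L+1), (f.1 i - ((i : ℕ) + 1))) = N - tri (L+1)
    omega
  · -- Cond of added
    intro i h
    have step := g.2.1 i h
    simp only [Fin.val_mk] at step ⊢
    nlinarith [step]
  · -- last bound
    exact Nat.le_add_left _ _
  · -- sum of added
    rw [Finset.sum_add_distrib, sum_id_fin]
    have := g.2.2
    omega
  · intro f
    apply Subtype.ext
    funext i
    have lb := lb_of_last f.2.1.1 f.2.1.2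
    have := lb i
    simp only
    omega
  · intro g
    apply Subtype.ext
    funext i
    simp only
    omega

lemma SC_top_empty (L N : ℕ) (hN : N < tri (L+1)) : SC L (L+1) N = 0 := by
  rw [SC, Nat.card_eq_zero]
  left
  rw [isEmpty_subtype]
  rintro f ⟨⟨h1, h2⟩, h3⟩
  exact absurd (sum_ge_tri h1 h2 h3) (by omega)

lemma SC_gt_empty (L k N : ℕ) (hN : N < k) : SC L k N = 0 := by
  rw [SC, Nat.card_eq_zero]
  left
  rw [isEmpty_subtype]
  rintro f ⟨⟨h1, h2⟩, h3⟩
  have := bound_of_sum f h3 (Fin.last L)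
  omega



/-! ### power series -/

def Aser (n : ℕ) : PowerSeries ℤ := PowerSeries.mk fun N => (alhcCount n N : ℤ)
def Sser (ℓ k : ℕ) : PowerSeries ℤ := PowerSeries.mk fun N => (SC ℓ k N : ℤ)

lemma SC_zero (ℓ N : ℕ) : SC ℓ 0 N = alhcCount (ℓ+1) N := by
  rw [SC, alhcCount_eq]
  apply Nat.card_congr
  apply Equiv.subtypeEquivRight
  intro f
  exact ⟨fun ⟨⟨h1, _⟩, h3⟩ => ⟨h1, h3⟩, fun ⟨h1, h3⟩ => ⟨⟨h1, Nat.zero_le _⟩, h3⟩⟩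

lemma Sser_zero (ℓ : ℕ) : Sser ℓ 0 = Aser (ℓ+1) := by
  ext N
  simp [Sser, Aser, coeff_mk, SC_zero]

lemma SC_rec (ℓ k N : ℕ) (hk1 : 1 ≤ k) (hk2 : k ≤ ℓ+1) :
    (SC (ℓ+1) k N : ℤ)
      = (if k ≤ N then (SC ℓ k (N-k) : ℤ) else 0) + (SC (ℓ+1) (k+1) N : ℤ) := by
  rcases le_or_gt k N with h | h
  · rw [if_pos h, SC_split (ℓ+1) k N, card_drop ℓ k N hk1 hk2 h]
    push_cast
    ring
  · rw [if_neg (by omega), SC_gt_empty (ℓ+1) k N h,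
      SC_gt_empty (ℓ+1) (k+1) N (by omega)]
    simp

lemma Sser_rec (ℓ k : ℕ) (hk1 : 1 ≤ k) (hk2 : k ≤ ℓ+1) :
    Sser (ℓ+1) k = Sser ℓ k * X^k + Sser (ℓ+1) (k+1) := by
  ext N
  rw [map_add, PowerSeries.coeff_mul_X_pow']
  simp only [Sser, coeff_mk]
  exact SC_rec ℓ k N hk1 hk2

lemma Sser_zero_split (ℓ : ℕ) : Sser ℓ 0 = Sser ℓ 1 + Aser ℓ := by
  ext N
  rw [map_add]
  simp only [Sser, Aser, coeff_mk]
  rw [SC_split ℓ 0 N, card_last_zero ℓ N]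
  push_cast
  ring

lemma Sser_top (ℓ : ℕ) : Sser ℓ (ℓ+1) = Aser (ℓ+1) * X^(tri (ℓ+1)) := by
  ext N
  rw [PowerSeries.coeff_mul_X_pow']
  simp only [Sser, Aser, coeff_mk]
  rcases le_or_gt (tri (ℓ+1)) N with h | h
  · rw [if_pos h, card_stair ℓ N h]
  · rw [if_neg (by omega), SC_top_empty ℓ N h]
    simp

/-! ### the algebraic side -/

def Qp (m : ℕ) : PowerSeries ℤ := ∏ i ∈ Finset.range m, (1 - X^(i+2))
def Bp (m : ℕ) : PowerSeries ℤ := ∏ i ∈ Finset.range m, (1 + X^(i+1))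

def ee : ℕ → ℕ → ℕ
  | 0, _ => 0
  | (k+1), m => ee k m + (m - k)

lemma ee_succ (k m : ℕ) : ee (k+1) m = ee k m + (m - k) := rfl

lemma ee_level (k m : ℕ) (h : k ≤ m) : ee k m + k = ee k (m+1) := by
  induction k with
  | zero => rfl
  | succ k ih =>
      have hk : k ≤ m := by omega
      rw [ee_succ, ee_succ]
      have := ih hk
      omega

lemma ee_self (m : ℕ) : ee m m = tri m := by
  induction m with
  | zero => rfl
  | succ m ih =>
      rw [ee_succ, ← ee_level m m le_rfl, ih, tri]
      omega

lemma Qp_succ (m : ℕ) : Qp (m+1) = Qp m * (1 - X^(m+2)) := Finset.prod_range_succ _ _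
lemma Bp_succ (m : ℕ) : Bp (m+1) = Bp m * (1 + X^(m+1)) := Finset.prod_range_succ _ _

lemma Bp_zero : Bp 0 = 1 := rfl
lemma Qp_zero : Qp 0 = 1 := rfl



/-! ### base case facts -/

lemma alhcCount_zero (N : ℕ) : alhcCount 0 N = if N = 0 then 1 else 0 := by
  rw [alhcCount_eq]
  rcases Nat.eq_zero_or_pos N with rfl | hN
  · rw [if_pos rfl]
    rw [Nat.card_eq_one_iff_unique]
    constructor
    · constructor
      intro a b
      apply Subtype.ext
      funext i
      exact i.elim0
    · exact ⟨⟨fun i => i.elim0, fun i => i.elim0, by simp⟩⟩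
  · rw [if_neg (by omega), Nat.card_eq_zero]
    left
    rw [isEmpty_subtype]
    rintro f ⟨-, h⟩
    simp at h
    omega

lemma alhcCount_one (N : ℕ) : alhcCount 1 N = 1 := by
  rw [alhcCount_eq, Nat.card_eq_one_iff_unique]
  constructor
  · constructor
    rintro ⟨a, -, ha⟩ ⟨b, -, hb⟩
    apply Subtype.ext
    funext i
    show a i = b i
    have hi : i = 0 := Subsingleton.elim i 0
    subst hi
    rw [Fin.sum_univ_one] at ha hb
    omega
  · refine ⟨⟨fun _ => N, fun i h => ?_, by simp⟩⟩
    exact absurd h (by omega)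

lemma Aser_one : Aser 1 * (1 - X) = 1 := by
  ext N
  rw [mul_sub, mul_one, map_sub, ← pow_one (X : PowerSeries ℤ),
    PowerSeries.coeff_mul_X_pow']
  simp only [Aser, coeff_mk, alhcCount_one, PowerSeries.coeff_one]
  rcases Nat.eq_zero_or_pos N with rfl | hN
  · simp
  · rw [if_pos (show 1 ≤ N by omega), if_neg (show ¬ N = 0 by omega)]
    simp

/-! ### the main induction -/

lemma step_id (ℓ a j : ℕ) (haj : a + j = ℓ + 1) :
    X^a * (1 - X^(ℓ+3)) * (X^(ee a (ℓ+1)) * Bp a * Bp (ℓ+1-a))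
      + X^(ee (a+1) (ℓ+2)) * Bp (a+1) * Bp j
    = X^(ee a (ℓ+2)) * Bp a * Bp (j+1) := by
  have h1 : ℓ + 1 - a = j := by omega
  rw [h1, Bp_succ j, Bp_succ a, ee_succ a (ℓ+2),
    ← ee_level a (ℓ+1) (by omega)]
  have hx : (X : PowerSeries ℤ)^(ℓ+2-a) * X^(a+1) = X^(ℓ+3) := by
    rw [← pow_add]; congr 1; omega
  have hj1 : j + 1 = ℓ + 2 - a := by omega
  rw [hj1]
  rw [pow_add, pow_add]
  linear_combination (X^a * X^(ee a (ℓ+1)) * Bp a * Bp j) * hx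

lemma SF : ∀ ℓ k, k ≤ ℓ + 1 →
    Sser ℓ k * Qp (ℓ+1) = X^(ee k (ℓ+1)) * Bp k * Bp (ℓ+1-k) := by
  intro ℓ
  induction ℓ with
  | zero =>
      intro k hk
      have hQ : Qp 1 = 1 - X^2 := by
        rw [Qp]; rw [Finset.prod_range_one]
      have hB : Bp 1 = 1 + X^1 := by
        rw [Bp]; rw [Finset.prod_range_one]
      have hfact : Aser 1 * Qp 1 = 1 + X := by
        rw [hQ, show (1 - X^2 : PowerSeries ℤ) = (1 - X) * (1 + X) by ring,
          ← mul_assoc, Aser_one, one_mul]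
      interval_cases k
      · rw [Sser_zero, hfact]
        simp [Bp_zero, ee, hB]
      · have h0 : Sser 0 1 = Aser 1 * X^(tri 1) := Sser_top 0
        rw [h0]
        have h2 : Aser 1 * X^(tri 1) * Qp 1 = (1+X) * X^(tri 1) := by
          rw [mul_comm (Aser 1) (X^(tri 1)), mul_assoc, hfact]
          ring
        rw [h2]
        have he : ee 1 (0+1) = 1 := rfl
        rw [he, hB, Bp_zero]
        have ht : tri 1 = 1 := rfl
        rw [ht]
        ring
  | succ ℓ IH =>
      intro k hk
      -- the step polynomial family
      set stp : ℕ → PowerSeries ℤ := fun t =>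
        X^t * (1 - X^(ℓ+3)) * (X^(ee t (ℓ+1)) * Bp t * Bp (ℓ+1-t)) with hstp
      -- claim1
      have claim1 : ∀ j, j ≤ ℓ + 1 →
          Sser (ℓ+1) (ℓ+2-j) * Qp (ℓ+2)
            = X^(tri (ℓ+2)) * (Sser (ℓ+1) 0 * Qp (ℓ+2))
              + ∑ t ∈ Finset.Ico (ℓ+2-j) (ℓ+2), stp t := by
        intro j
        induction j with
        | zero =>
            intro _
            simp only [Nat.sub_zero, Finset.Ico_self, Finset.sum_empty, add_zero]
            rw [show ℓ+2 = (ℓ+1)+1 from rfl, Sser_top (ℓ+1), Sser_zero (ℓ+1)]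
            ring
        | succ j ihj =>
            intro hj
            have hk' : ℓ+2-(j+1) = ℓ+1-j := by omega
            rw [hk']
            have hk1 : 1 ≤ ℓ+1-j := by omega
            have hk2 : ℓ+1-j ≤ ℓ+1 := by omega
            rw [Sser_rec ℓ (ℓ+1-j) hk1 hk2, add_mul]
            have hj' : ℓ+2-j = (ℓ+1-j)+1 := by omega
            have h2 := ihj (by omega)
            rw [hj'] at h2
            rw [h2]
            have h1 : Sser ℓ (ℓ+1-j) * X^(ℓ+1-j) * Qp (ℓ+2) = stp (ℓ+1-j) := by
              rw [Qp_succ (ℓ+1), hstp]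
              have := IH (ℓ+1-j) hk2
              calc Sser ℓ (ℓ+1-j) * X^(ℓ+1-j) * (Qp (ℓ+1) * (1 - X^(ℓ+3)))
                  = (Sser ℓ (ℓ+1-j) * Qp (ℓ+1)) * X^(ℓ+1-j) * (1 - X^(ℓ+3)) := by ring
                _ = (X^(ee (ℓ+1-j) (ℓ+1)) * Bp (ℓ+1-j) * Bp (ℓ+1-(ℓ+1-j)))
                      * X^(ℓ+1-j) * (1 - X^(ℓ+3)) := by rw [this]
                _ = X^(ℓ+1-j) * (1 - X^(ℓ+3))
                      * (X^(ee (ℓ+1-j) (ℓ+1)) * Bp (ℓ+1-j) * Bp (ℓ+1-(ℓ+1-j))) := by ring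
            rw [h1]
            rw [Finset.sum_eq_sum_Ico_succ_bot (show ℓ+1-j < ℓ+2 by omega) stp]
            rw [show (ℓ+1-j)+1 = ℓ+2-j from by omega]
            ring
      -- claimT
      have claimT : ∀ j, j ≤ ℓ + 2 →
          (∑ t ∈ Finset.Ico (ℓ+2-j) (ℓ+2), stp t) + X^(tri (ℓ+2)) * Bp (ℓ+2)
            = X^(ee (ℓ+2-j) (ℓ+2)) * Bp (ℓ+2-j) * Bp j := by
        intro j
        induction j with
        | zero =>
            intro _
            simp only [Nat.sub_zero, Finset.Ico_self, Finset.sum_empty, zero_add]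
            rw [ee_self (ℓ+2), Bp_zero, mul_one]
        | succ j ihj =>
            intro hj
            have ha : ℓ+2-(j+1) = ℓ+1-j := by omega
            rw [ha]
            rw [Finset.sum_eq_sum_Ico_succ_bot (show ℓ+1-j < ℓ+2 by omega) stp]
            rw [show (ℓ+1-j)+1 = ℓ+2-j from by omega]
            have h2 := ihj (by omega)
            rw [add_assoc, h2]
            have haj : (ℓ+1-j) + j = ℓ + 1 := by omega
            have := step_id ℓ (ℓ+1-j) j haj
            rw [hstp]
            rw [show ℓ+2-j = (ℓ+1-j)+1 from by omega]
            exact this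
      -- solve for u
      have hu : Sser (ℓ+1) 0 * Qp (ℓ+2) = Bp (ℓ+2) := by
        have e1 : Aser (ℓ+1) * Qp (ℓ+2) = stp 0 := by
          rw [Qp_succ (ℓ+1), ← Sser_zero ℓ, hstp]
          have := IH 0 (by omega)
          calc Sser ℓ 0 * (Qp (ℓ+1) * (1 - X^(ℓ+3)))
              = (Sser ℓ 0 * Qp (ℓ+1)) * (1 - X^(ℓ+3)) := by ring
            _ = (X^(ee 0 (ℓ+1)) * Bp 0 * Bp (ℓ+1-0)) * (1 - X^(ℓ+3)) := by rw [this]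
            _ = X^0 * (1 - X^(ℓ+3)) * (X^(ee 0 (ℓ+1)) * Bp 0 * Bp (ℓ+1-0)) := by ring
        have e2 := claim1 (ℓ+1) le_rfl
        rw [show ℓ+2-(ℓ+1) = 1 from by omega] at e2
        have e3 : Sser (ℓ+1) 0 * Qp (ℓ+2)
            = Sser (ℓ+1) 1 * Qp (ℓ+2) + Aser (ℓ+1) * Qp (ℓ+2) := by
          rw [Sser_zero_split (ℓ+1), add_mul]
        have e4 := claimT (ℓ+2) le_rfl
        rw [show ℓ+2-(ℓ+2) = 0 from by omega] at e4
        rw [Finset.sum_eq_sum_Ico_succ_bot (show (0:ℕ) < ℓ+2 by omega) stp] at e4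
        simp only [ee, pow_zero, Bp_zero, one_mul, mul_one] at e4
        -- e4 : stp 0 + Σ_{Ico 1 (ℓ+2)} + X^tri * Bp (ℓ+2) = Bp (ℓ+2)
        rw [zero_add] at e4
        have E := e3
        rw [e2, e1] at E
        have e5 : Sser (ℓ+1) 0 * Qp (ℓ+2) * (1 - X^(tri (ℓ+2)))
            = Bp (ℓ+2) * (1 - X^(tri (ℓ+2))) := by
          linear_combination E + e4
        have hnz : (1 - X^(tri (ℓ+2)) : PowerSeries ℤ) ≠ 0 := by
          intro h
          have := congrArg (PowerSeries.constantCoeff) h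
          rw [map_sub, map_one, map_pow, PowerSeries.constantCoeff_X,
            zero_pow (show tri (ℓ+2) ≠ 0 from by rw [tri]; omega), map_zero] at this
          omega
        exact mul_right_cancel₀ hnz e5
      -- conclude
      rcases Nat.eq_zero_or_pos k with rfl | hkpos
      · rw [Sser_zero (ℓ+1)]
        rw [← Sser_zero (ℓ+1)]
        rw [hu]
        simp only [ee, pow_zero, Bp_zero, one_mul, Nat.sub_zero]
      · set j := ℓ+2-k with hjdef
        have hj : j ≤ ℓ+1 := by omega
        have hc1 := claim1 j hj
        have hcT := claimT j (by omega)
        rw [show ℓ+2-j = k from by omega] at hc1 hcT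
        rw [hc1, hu]
        rw [show Bp (ℓ+2-k) = Bp j from by rw [hjdef]]
        linear_combination hcT

end ALHC

/-- `Aₙ(q) = ∏_{i=1}^{n} (1+qⁱ)/(1−q^{i+1})`, with denominators cleared. -/



theorem alhc_generating_function (n : ℕ) :
    PowerSeries.mk (fun N => (alhcCount n N : ℤ)) *
      (∏ i ∈ Finset.range n, (1 - (X : PowerSeries ℤ) ^ (i + 2))) =
    ∏ i ∈ Finset.range n, (1 + (X : PowerSeries ℤ) ^ (i + 1)) := by
  cases n with
  | zero =>
      simp only [Finset.range_zero, Finset.prod_empty, mul_one]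
      ext N
      rw [PowerSeries.coeff_mk]
      rw [ALHC.alhcCount_zero]
      rw [PowerSeries.coeff_one]
      split_ifs <;> simp
  | succ ℓ =>
      have h := ALHC.SF ℓ 0 (Nat.zero_le _)
      rw [ALHC.Sser_zero] at h
      simp only [ALHC.ee, pow_zero, ALHC.Bp_zero, one_mul, Nat.sub_zero] at h
      exact h
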